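/- Let N be a normal n×n complex matrix. Then there exists a unitary n×n matrix U such that for every matrix B in the C*-algebra generated by N (equivalently, every polynomial in N and N*), every diagonal entry of U*BU equals the normalized trace τ(B) = (1/n)·tr(B). -/

import Mathlib

open Matrix


noncomputable def dftZeta (n : ℕ) : ℂ := Complex.exp (2 * Real.pi * Complex.I / n)

noncomputable def dftMat (n : ℕ) : Matrix (Fin n) (Fin n) ℂ :=
  Matrix.of fun k j => dftZeta n ^ ((k : ℕ) * (j : ℕ)) * ((Real.sqrt n)⁻¹ : ℝ)

lemma dft_conj (n : ℕ) : (starRingEnd ℂ) (dftZeta n) = (dftZeta n)⁻¹ := by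
  rw [dftZeta, ← Complex.exp_conj, ← Complex.exp_neg]
  congr 1
  simp [map_div₀, Complex.conj_I, map_ofNat]
  ring

lemma dft_zeta_ne_zero (n : ℕ) : dftZeta n ≠ 0 := Complex.exp_ne_zero _

lemma dft_sum (n : ℕ) (hn : 0 < n) (j l : Fin n) :
    ∑ k : Fin n, ((dftZeta n)⁻¹ ^ ((k : ℕ) * (j : ℕ))) * (dftZeta n ^ ((k : ℕ) * (l : ℕ)))
      = if j = l then (n : ℂ) else 0 := by
  have hζ : IsPrimitiveRoot (dftZeta n) n := Complex.isPrimitiveRoot_exp n hn.ne'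
  set ζ := dftZeta n with hzdef
  have hz := dft_zeta_ne_zero n
  have key : ∀ k : ℕ, (ζ⁻¹ ^ (k * (j : ℕ))) * (ζ ^ (k * (l : ℕ)))
      = (ζ ^ ((l : ℤ) - (j : ℤ))) ^ k := by
    intro k
    rw [← zpow_natCast ζ (k * l), ← zpow_natCast ζ⁻¹ (k * j), _root_.inv_zpow, ← _root_.zpow_neg,
      ← zpow_add₀ hz, ← zpow_natCast (ζ ^ ((l : ℤ) - (j : ℤ))), ← _root_.zpow_mul]
    congr 1
    push_cast
    ring
  simp_rw [key]
  rcases eq_or_ne j l with h | h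
  · subst h; simp
  · rw [if_neg h]
    set w : ℂ := ζ ^ ((l : ℤ) - (j : ℤ)) with hwdef
    have hw1 : w ≠ 1 := by
      intro hw
      have hdvd := (hζ.zpow_eq_one_iff_dvd _).mp hw
      have h0 : ((l : ℤ) - (j : ℤ)) = 0 :=
        Int.eq_zero_of_dvd_of_natAbs_lt_natAbs hdvd (by
          have hj := j.2; have hl := l.2; omega)
      have hj := j.2; have hl := l.2
      have : (l : ℕ) = (j : ℕ) := by omega
      exact h (Fin.ext this.symm)
    have hwn : w ^ n = 1 := by
      rw [hwdef, ← zpow_natCast, ← _root_.zpow_mul, mul_comm, _root_.zpow_mul, zpow_natCast,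
        hζ.pow_eq_one, _root_.one_zpow]
    rw [Fin.sum_univ_eq_sum_range (fun k => w ^ k), geom_sum_eq hw1, hwn, sub_self, zero_div]

lemma dft_unitary (n : ℕ) (hn : 0 < n) : dftMat n ∈ Matrix.unitaryGroup (Fin n) ℂ := by
  rw [Matrix.mem_unitaryGroup_iff']
  ext j l
  have hs : ((((Real.sqrt n)⁻¹ : ℝ)) : ℂ) * (((Real.sqrt n)⁻¹ : ℝ) : ℂ) = (n : ℂ)⁻¹ := by
    rw [← Complex.ofReal_mul, ← mul_inv, Real.mul_self_sqrt n.cast_nonneg,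
      Complex.ofReal_inv, Complex.ofReal_natCast]
  have := dft_sum n hn j l
  simp only [Matrix.mul_apply, Matrix.star_apply, Matrix.one_apply, dftMat, Matrix.of_apply,
    Complex.star_def, RingHom.map_mul, map_pow, Complex.conj_ofReal]
  calc ∑ k : Fin n, (starRingEnd ℂ) (dftZeta n) ^ ((k:ℕ)*(j:ℕ)) * (((Real.sqrt n)⁻¹ : ℝ) : ℂ) *
        (dftZeta n ^ ((k:ℕ)*(l:ℕ)) * (((Real.sqrt n)⁻¹ : ℝ) : ℂ))
      = (n : ℂ)⁻¹ * ∑ k : Fin n, ((dftZeta n)⁻¹ ^ ((k:ℕ)*(j:ℕ))) * (dftZeta n ^ ((k:ℕ)*(l:ℕ))) := by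
        rw [Finset.mul_sum]
        refine Finset.sum_congr rfl fun k _ => ?_
        rw [dft_conj, ← hs]; ring
    _ = if j = l then 1 else 0 := by
        rw [this]
        have hne : (n : ℂ) ≠ 0 := Nat.cast_ne_zero.mpr hn.ne'
        rcases eq_or_ne j l with h | h <;> simp [h, inv_mul_cancel₀ hne]

lemma dft_diag (n : ℕ) (hn : 0 < n) (g : Fin n → ℂ) (j : Fin n) :
    ((dftMat n)ᴴ * Matrix.diagonal g * dftMat n) j j = (n : ℂ)⁻¹ * ∑ k, g k := by
  have hs : ((((Real.sqrt n)⁻¹ : ℝ)) : ℂ) * (((Real.sqrt n)⁻¹ : ℝ) : ℂ) = (n : ℂ)⁻¹ := by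
    rw [← Complex.ofReal_mul, ← mul_inv, Real.mul_self_sqrt n.cast_nonneg,
      Complex.ofReal_inv, Complex.ofReal_natCast]
  rw [Matrix.mul_apply, Finset.mul_sum]
  refine Finset.sum_congr rfl fun k _ => ?_
  rw [Matrix.mul_apply, Finset.sum_eq_single k (by
      intro b _ hb
      simp [Matrix.diagonal_apply_ne _ hb]) (by simp)]
  simp only [dftMat, Matrix.conjTranspose_apply, Matrix.of_apply, Matrix.diagonal_apply_eq,
    Complex.star_def, RingHom.map_mul, map_pow, dft_conj, Complex.conj_ofReal]
  have hzz : ((dftZeta n)⁻¹) ^ ((k:ℕ)*(j:ℕ)) * (dftZeta n) ^ ((k:ℕ)*(j:ℕ)) = 1 := by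
    rw [← mul_pow, inv_mul_cancel₀ (dft_zeta_ne_zero n), one_pow]
  calc ((dftZeta n)⁻¹ ^ ((k:ℕ)*(j:ℕ)) * (((Real.sqrt n)⁻¹:ℝ):ℂ)) * g k *
        (dftZeta n ^ ((k:ℕ)*(j:ℕ)) * (((Real.sqrt n)⁻¹:ℝ):ℂ))
      = ((dftZeta n)⁻¹ ^ ((k:ℕ)*(j:ℕ)) * dftZeta n ^ ((k:ℕ)*(j:ℕ))) *
        ((((Real.sqrt n)⁻¹:ℝ):ℂ) * (((Real.sqrt n)⁻¹:ℝ):ℂ)) * g k := by ring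
    _ = (n:ℂ)⁻¹ * g k := by rw [hzz, hs, one_mul]

lemma toEuclideanLin_mul' {n : ℕ} (A B : Matrix (Fin n) (Fin n) ℂ) :
    Matrix.toEuclideanLin (A * B) = Matrix.toEuclideanLin A * Matrix.toEuclideanLin B := by
  ext x
  simp only [Module.End.mul_apply, Matrix.toEuclideanLin_apply]
  have : (WithLp.equiv 2 (Fin n → ℂ))
      ((WithLp.equiv 2 (Fin n → ℂ)).symm (B *ᵥ (WithLp.equiv 2 (Fin n → ℂ)) x))
      = B *ᵥ (WithLp.equiv 2 (Fin n → ℂ)) x := rfl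
  rw [Matrix.mulVec_mulVec]

lemma normal_diag (n : ℕ) (N : Matrix (Fin n) (Fin n) ℂ) (hN : N * Nᴴ = Nᴴ * N) :
    ∃ U ∈ Matrix.unitaryGroup (Fin n) ℂ, ∃ c d : Fin n → ℂ,
      N * U = U * Matrix.diagonal c ∧ Nᴴ * U = U * Matrix.diagonal d := by
  classical
  set M₁ : Matrix (Fin n) (Fin n) ℂ := N + Nᴴ with hM₁
  set M₂ : Matrix (Fin n) (Fin n) ℂ := Complex.I • (N - Nᴴ) with hM₂
  have h₁ : M₁.IsHermitian := by
    rw [hM₁, Matrix.IsHermitian, conjTranspose_add, conjTranspose_conjTranspose, add_comm]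
  have h₂ : M₂.IsHermitian := by
    rw [hM₂, Matrix.IsHermitian, conjTranspose_smul, conjTranspose_sub,
      conjTranspose_conjTranspose, Complex.star_def, Complex.conj_I, neg_smul, smul_sub,
      smul_sub, neg_sub]
  have hMcomm : M₁ * M₂ = M₂ * M₁ := by
    rw [hM₁, hM₂, Matrix.mul_smul, Matrix.smul_mul]
    congr 1
    simp only [Matrix.mul_sub, Matrix.sub_mul, Matrix.mul_add, Matrix.add_mul, hN]
    abel
  have hS₁ : (Matrix.toEuclideanLin M₁).IsSymmetric := Matrix.isHermitian_iff_isSymmetric.mp h₁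
  have hS₂ : (Matrix.toEuclideanLin M₂).IsSymmetric := Matrix.isHermitian_iff_isSymmetric.mp h₂
  have hC : Commute (Matrix.toEuclideanLin M₁) (Matrix.toEuclideanLin M₂) := by
    rw [Commute, SemiconjBy, ← toEuclideanLin_mul', ← toEuclideanLin_mul', hMcomm]
  have hrank : Module.finrank ℂ (EuclideanSpace ℂ (Fin n)) = n := finrank_euclideanSpace_fin
  have hOrtho := LinearMap.IsSymmetric.orthogonalFamily_eigenspace_inf_eigenspace hS₁ hS₂
  have hInternal := LinearMap.IsSymmetric.directSum_isInternal_of_commute hS₁ hS₂ hC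
  set V : ℂ × ℂ → Submodule ℂ (EuclideanSpace ℂ (Fin n)) := fun i =>
    Module.End.eigenspace (Matrix.toEuclideanLin M₁) i.2 ⊓
      Module.End.eigenspace (Matrix.toEuclideanLin M₂) i.1 with hV
  have hfin : Fintype {i : ℂ × ℂ // V i ≠ ⊥} :=
    hInternal.submodule_iSupIndep.fintypeNeBotOfFiniteDimensional
  have hInternal' : DirectSum.IsInternal (fun i : {i : ℂ × ℂ // V i ≠ ⊥} => V i) :=
    DirectSum.isInternal_ne_bot_iff.mpr hInternal
  have hOrtho' := hOrtho.comp (Subtype.val_injective : Function.Injective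
      ((↑) : {i : ℂ × ℂ // V i ≠ ⊥} → ℂ × ℂ))
  set b := hInternal'.subordinateOrthonormalBasis hrank hOrtho' with hb
  have hev : ∀ i : Fin n, ∃ cd : ℂ × ℂ,
      Matrix.toEuclideanLin N (b i) = cd.1 • b i ∧
      Matrix.toEuclideanLin Nᴴ (b i) = cd.2 • b i := by
    intro i
    have hmem := hInternal'.subordinateOrthonormalBasis_subordinate hrank i hOrtho'
    set μ := (hInternal'.subordinateOrthonormalBasisIndex hrank i hOrtho' :
      {i : ℂ × ℂ // V i ≠ ⊥}) with hμ
    obtain ⟨hmem1, hmem2⟩ : b i ∈ Module.End.eigenspace (Matrix.toEuclideanLin M₁) (μ : ℂ × ℂ).2 ⊓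
        Module.End.eigenspace (Matrix.toEuclideanLin M₂) (μ : ℂ × ℂ).1 := hmem
    rw [SetLike.mem_coe, Module.End.mem_eigenspace_iff] at hmem1 hmem2
    have hNdec : N = (2⁻¹ : ℂ) • (M₁ - Complex.I • M₂) := by
      rw [hM₁, hM₂, smul_smul, Complex.I_mul_I]
      module
    have hNHdec : Nᴴ = (2⁻¹ : ℂ) • (M₁ + Complex.I • M₂) := by
      rw [hM₁, hM₂, smul_smul, Complex.I_mul_I]
      module
    refine ⟨⟨2⁻¹ * ((μ : ℂ × ℂ).2 - Complex.I * (μ : ℂ × ℂ).1),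
        2⁻¹ * ((μ : ℂ × ℂ).2 + Complex.I * (μ : ℂ × ℂ).1)⟩, ?_, ?_⟩
    · rw [hNdec, _root_.map_smul, map_sub, _root_.map_smul, LinearMap.smul_apply, LinearMap.sub_apply,
        LinearMap.smul_apply, hmem1, hmem2]
      module
    · rw [hNHdec, _root_.map_smul, map_add, _root_.map_smul, LinearMap.smul_apply, LinearMap.add_apply,
        LinearMap.smul_apply, hmem1, hmem2]
      module
  choose cd hcd1 hcd2 using hev
  set U : Matrix (Fin n) (Fin n) ℂ := Matrix.of fun k i => b i k with hUdef
  have hU : U ∈ Matrix.unitaryGroup (Fin n) ℂ := by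
    rw [Matrix.mem_unitaryGroup_iff']
    ext i j
    have horth := orthonormal_iff_ite.mp b.orthonormal i j
    simp only [PiLp.inner_apply, RCLike.inner_apply] at horth
    simp only [Matrix.mul_apply, Matrix.star_apply, hUdef, Matrix.of_apply, Matrix.one_apply,
      Complex.star_def]
    rw [← horth]; exact Finset.sum_congr rfl fun _ _ => mul_comm _ _
  have hact : ∀ (A : Matrix (Fin n) (Fin n) ℂ) (e : Fin n → ℂ),
      (∀ i, Matrix.toEuclideanLin A (b i) = e i • b i) → A * U = U * Matrix.diagonal e := by
    intro A e he
    ext k i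
    have key := congrArg (fun v : EuclideanSpace ℂ (Fin n) => v k) (he i)
    simp only [Matrix.toEuclideanLin_apply, Matrix.mulVec,
      dotProduct, PiLp.smul_apply, smul_eq_mul] at key
    rw [Matrix.mul_apply, Matrix.mul_diagonal]
    simp only [hUdef, Matrix.of_apply]
    rw [mul_comm]
    exact key
  exact ⟨U, hU, fun i => (cd i).1, fun i => (cd i).2,
    hact N _ hcd1, hact Nᴴ _ hcd2⟩


/-- For a normal matrix `N`, there is a unitary `U` such that for every `B`
in the (C*-)algebra generated by `N` and `Nᴴ`, every diagonal entry of
`Uᴴ * B * U` equals the normalized trace `(1/n) tr B`. -/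
theorem normal_matrix_constant_diagonal (n : ℕ) (hn : 0 < n)
    (N : Matrix (Fin n) (Fin n) ℂ) (hN : N * Nᴴ = Nᴴ * N) :
    ∃ U ∈ Matrix.unitaryGroup (Fin n) ℂ,
      ∀ B ∈ Algebra.adjoin ℂ ({N, Nᴴ} : Set (Matrix (Fin n) (Fin n) ℂ)),
        ∀ j : Fin n, (Uᴴ * B * U) j j = (1 / n : ℂ) * Matrix.trace B := by
  classical
  obtain ⟨U, hU, c, d, hNU, hNHU⟩ := normal_diag n N hN
  set F := dftMat n with hF
  have hF' : F ∈ Matrix.unitaryGroup (Fin n) ℂ := dft_unitary n hn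
  refine ⟨U * F, mul_mem hU hF', ?_⟩
  intro B hB j
  have hdiag : ∃ g : Fin n → ℂ, B * U = U * Matrix.diagonal g := by
    induction hB using Algebra.adjoin_induction with
    | mem x hx =>
      rcases hx with hx | hx
      · exact ⟨c, hx ▸ hNU⟩
      · exact ⟨d, (Set.mem_singleton_iff.mp hx) ▸ hNHU⟩
    | algebraMap r =>
      refine ⟨fun _ => r, ?_⟩
      have hdr : Matrix.diagonal (fun _ : Fin n => r) = r • (1 : Matrix (Fin n) (Fin n) ℂ) := by
        ext a b
        by_cases h : a = b <;> simp [Matrix.diagonal_apply, Matrix.one_apply, h]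
      rw [hdr, Algebra.algebraMap_eq_smul_one, Matrix.smul_mul, Matrix.mul_smul, one_mul, mul_one]
    | add x y hx hy ihx ihy =>
      obtain ⟨g₁, hg₁⟩ := ihx
      obtain ⟨g₂, hg₂⟩ := ihy
      exact ⟨g₁ + g₂, by rw [Matrix.add_mul, hg₁, hg₂, ← Matrix.mul_add, Matrix.diagonal_add]; rfl⟩
    | mul x y hx hy ihx ihy =>
      obtain ⟨g₁, hg₁⟩ := ihx
      obtain ⟨g₂, hg₂⟩ := ihy
      refine ⟨g₁ * g₂, ?_⟩
      rw [mul_assoc, hg₂, ← mul_assoc, hg₁, mul_assoc, Matrix.diagonal_mul_diagonal]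
      rfl
  obtain ⟨g, hg⟩ := hdiag
  have hUU : Uᴴ * U = 1 := by
    rw [← Matrix.star_eq_conjTranspose]
    exact Matrix.mem_unitaryGroup_iff'.mp hU
  have hUU' : U * Uᴴ = 1 := by
    rw [← Matrix.star_eq_conjTranspose]
    exact Matrix.mem_unitaryGroup_iff.mp hU
  have hBU : Uᴴ * B * U = Matrix.diagonal g := by
    rw [mul_assoc, hg, ← mul_assoc, hUU, one_mul]
  have htr : Matrix.trace B = ∑ k, g k := by
    have : B = U * Matrix.diagonal g * Uᴴ := by
      rw [← hg, mul_assoc, hUU', mul_one]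
    rw [this, Matrix.trace_mul_cycle, hUU, one_mul, Matrix.trace_diagonal]
  have hfinal : (U * F)ᴴ * B * (U * F) = Fᴴ * Matrix.diagonal g * F := by
    rw [Matrix.conjTranspose_mul]
    calc Fᴴ * Uᴴ * B * (U * F) = Fᴴ * (Uᴴ * B * U) * F := by
          simp only [mul_assoc]
      _ = Fᴴ * Matrix.diagonal g * F := by rw [hBU]
  rw [hfinal, dft_diag n hn g j, htr, one_div]
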